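/- Let X be a compact Hausdorff space, let n ≥ 1 be an integer, and let μ be a Borel probability measure on X such that μ({x₀}) > 1/n for some point x₀ ∈ X. Then there do not exist Borel measurable functions u₁, …, uₙ : X → 𝕋 such that {u₁, …, uₙ} is an orthonormal set in L²(X, μ), i.e. such that ∫_X u_i · conj(u_j) dμ = 0 whenever i ≠ j. -/

import Mathlib

open MeasureTheory
open scoped ENNReal

/-- If `μ` is a Borel probability measure on a compact Hausdorff space `X` with an atom of
mass exceeding `1/n`, then there is no orthonormal family of `n` circle-valued measurable
functions in `L²(X, μ)`. -/
theorem no_orthonormal_unimodular_family_of_large_atom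
    (X : Type*) [TopologicalSpace X] [CompactSpace X] [T2Space X]
    [MeasurableSpace X] [BorelSpace X]
    (n : ℕ) (hn : 1 ≤ n)
    (μ : Measure X) [IsProbabilityMeasure μ]
    (x₀ : X) (hx₀ : (1 : ℝ≥0∞) / n < μ {x₀}) :
    ¬ ∃ u : Fin n → X → ℂ,
        (∀ i, Measurable (u i)) ∧
        (∀ i x, ‖u i x‖ = 1) ∧
        (∀ i j, i ≠ j → ∫ x, u i x * (starRingEnd ℂ) (u j x) ∂μ = 0) := by
  rintro ⟨u, hmeas, hnorm, horth⟩
  have hnpos : (0:ℝ) < n := by exact_mod_cast Nat.lt_of_lt_of_le Nat.zero_lt_one hn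
  have hconj : Continuous fun z : ℂ => (starRingEnd ℂ) z := RCLike.continuous_conj
  set c : Fin n → ℂ := fun i => (starRingEnd ℂ) (u i x₀) with hc
  set f : X → ℂ := fun x => ∑ i, c i * u i x with hf
  have hfmeas : Measurable f :=
    Finset.measurable_sum _ (fun i _ => (hmeas i).const_mul _)
  -- each product is integrable
  have hint : ∀ i j : Fin n, Integrable (fun x => u i x * (starRingEnd ℂ) (u j x)) μ := by
    intro i j
    refine (integrable_const (1:ℝ)).mono'
      ((hmeas i).mul (hconj.measurable.comp (hmeas j))).aestronglyMeasurable ?_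
    filter_upwards with x
    simp [norm_mul, hnorm]
  -- |c i| = 1
  have hcnorm : ∀ i, ‖c i‖ = 1 := fun i => by simp [hc, hnorm]
  -- expand f x * conj (f x)
  have expand : ∀ x, f x * (starRingEnd ℂ) (f x)
      = ∑ i, ∑ j, (c i * (starRingEnd ℂ) (c j)) * (u i x * (starRingEnd ℂ) (u j x)) := by
    intro x
    simp only [hf, map_sum, map_mul, Finset.sum_mul_sum]
    refine Finset.sum_congr rfl fun i _ => Finset.sum_congr rfl fun j _ => by ring
  -- key identity : ∫ f * conj f = n
  have key : ∫ x, f x * (starRingEnd ℂ) (f x) ∂μ = (n : ℂ) := by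
    rw [show (fun x => f x * (starRingEnd ℂ) (f x))
        = fun x => ∑ i, ∑ j, (c i * (starRingEnd ℂ) (c j)) * (u i x * (starRingEnd ℂ) (u j x))
        from funext expand]
    rw [integral_finset_sum _ fun i _ =>
      integrable_finset_sum _ fun j _ => (hint i j).const_mul _]
    have : ∀ i : Fin n, (∫ x, ∑ j, (c i * (starRingEnd ℂ) (c j)) *
        (u i x * (starRingEnd ℂ) (u j x)) ∂μ) = 1 := by
      intro i
      rw [integral_finset_sum _ fun j _ => (hint i j).const_mul _]
      have hdiag : ∀ j : Fin n, (∫ x, (c i * (starRingEnd ℂ) (c j)) *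
          (u i x * (starRingEnd ℂ) (u j x)) ∂μ) = if j = i then 1 else 0 := by
        intro j
        rw [integral_const_mul]
        by_cases h : j = i
        · subst h
          have h1 : (fun x => u j x * (starRingEnd ℂ) (u j x)) = fun _ => (1:ℂ) := by
            funext x
            rw [RCLike.mul_conj]
            simp [hnorm]
          rw [h1, integral_const, if_pos rfl]
          have h2 : c j * (starRingEnd ℂ) (c j) = 1 := by
            rw [RCLike.mul_conj]
            simp [hcnorm]
          simp [h2]
        · rw [horth i j (fun hh => h hh.symm), mul_zero, if_neg h]
      simp [hdiag]
    simp [this]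
  -- pointwise bound on ‖f‖
  have hfb : ∀ x, ‖f x‖ ≤ (n:ℝ) := by
    intro x
    calc ‖f x‖ ≤ ∑ i, ‖c i * u i x‖ := norm_sum_le _ _
    _ = n := by simp [norm_mul, hcnorm, hnorm]
  have hintf : Integrable (fun x => f x * (starRingEnd ℂ) (f x)) μ := by
    refine (integrable_const ((n:ℝ)^2)).mono'
      (hfmeas.mul (hconj.measurable.comp hfmeas)).aestronglyMeasurable ?_
    filter_upwards with x
    rw [norm_mul, RCLike.norm_conj]
    nlinarith [hfb x, norm_nonneg (f x)]
  -- real version with g = ‖f‖²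
  set g : X → ℝ := fun x => ‖f x‖ ^ 2 with hg
  have hre : ∀ x, RCLike.re (f x * (starRingEnd ℂ) (f x)) = g x := by
    intro x
    rw [RCLike.mul_conj, ← RCLike.ofReal_pow, RCLike.ofReal_re]
  have keyg : ∫ x, g x ∂μ = (n : ℝ) := by
    have h2 := integral_re hintf
    rw [key] at h2
    rw [show (fun x => g x) = fun x => RCLike.re (f x * (starRingEnd ℂ) (f x))
      from funext fun x => (hre x).symm]
    simpa using h2
  have hgbound : ∀ x, g x ≤ (n:ℝ)^2 := by
    intro x
    have := hfb x
    simp only [hg]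
    nlinarith [norm_nonneg (f x)]
  have hgint : Integrable g μ := by
    refine (integrable_const ((n:ℝ)^2)).mono'
      ((hfmeas.norm.pow_const 2).aestronglyMeasurable) ?_
    filter_upwards with x
    rw [Real.norm_eq_abs, abs_of_nonneg (by positivity)]
    exact hgbound x
  -- value at x₀
  have hfx₀ : f x₀ = (n : ℂ) := by
    have h1 : ∀ i : Fin n, c i * u i x₀ = 1 := by
      intro i
      rw [hc]
      rw [RCLike.conj_mul]
      simp [hnorm]
    simp [hf, h1]
  have hgx₀ : g x₀ = (n:ℝ)^2 := by simp [hg, hfx₀]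
  -- lower bound via the atom
  have hlow : (μ {x₀}).toReal * (n:ℝ)^2 ≤ (n : ℝ) := by
    calc (μ {x₀}).toReal * (n:ℝ)^2 = ∫ x in {x₀}, g x ∂μ := by
          rw [integral_singleton, hgx₀, smul_eq_mul]; rfl
    _ ≤ ∫ x, g x ∂μ := by
          refine setIntegral_le_integral hgint ?_
          filter_upwards with x
          positivity
    _ = n := keyg
  -- contradiction
  have htop : μ {x₀} ≠ ⊤ := measure_ne_top μ _
  have ht : (1:ℝ)/n < (μ {x₀}).toReal := by
    have h3 : ((1:ℝ≥0∞)/n).toReal < (μ {x₀}).toReal :=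
      ENNReal.toReal_strict_mono htop hx₀
    simpa [ENNReal.toReal_div] using h3
  have hnn : (1/(n:ℝ)) * (n:ℝ)^2 = n := by field_simp
  have hmul := mul_lt_mul_of_pos_right ht (show (0:ℝ) < (n:ℝ)^2 by positivity)
  linarith
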